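/- For every n ∈ ℕ and every array u : Fin n → Fin n → Fin n → ℂ satisfying u i j k = u i k j for all i, j, k, the following identity of complex numbers holds (the right-hand side being a real number coerced to ℂ): Σ_{i,j,k} (u^i_{jk} · conj(u^j_{ik}) + |u^j_{ik}|²) = Σ_{i<j<k} (|u^i_{jk} + u^j_{ik} + u^k_{ij}|² + |u^i_{jk}|² + |u^j_{ik}|² + |u^k_{ij}|²) + Σ_{i≠j} (|u^i_{jj} + u^j_{ij}|² + 2|u^j_{ij}|²) + Σ_i 2|u^i_{ii}|². -/

import Mathlib

namespace LagrangianCurvatureAux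

noncomputable def f3 {n : ℕ} (u : Fin n → Fin n → Fin n → ℂ) (i j k : Fin n) : ℂ :=
  u i j k * (starRingEnd ℂ) (u j i k) + ((‖u j i k‖ ^ 2 : ℝ) : ℂ)

noncomputable def g3 {n : ℕ} (u : Fin n → Fin n → Fin n → ℂ) (i j k : Fin n) : ℂ :=
  (if i < j ∧ j < k then
      ((‖u i j k + u j i k + u k i j‖ ^ 2 + ‖u i j k‖ ^ 2 +
          ‖u j i k‖ ^ 2 + ‖u k i j‖ ^ 2 : ℝ) : ℂ)
    else 0) +
  ((if j = k then
      (if i ≠ j then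
        ((‖u i j j + u j i j‖ ^ 2 + 2 * ‖u j i j‖ ^ 2 : ℝ) : ℂ)
      else 0)
    else 0) +
  (if j = k then
      (if i = j then ((2 * ‖u i i i‖ ^ 2 : ℝ) : ℂ) else 0)
    else 0))

lemma c2 (z : ℂ) : ((‖z‖ ^ 2 : ℝ) : ℂ) = z * (starRingEnd ℂ) z := by
  rw [Complex.sq_norm]; exact (Complex.mul_conj z).symm

lemma sum3_swap12 {n : ℕ} (f : Fin n → Fin n → Fin n → ℂ) :
    ∑ i : Fin n, ∑ j : Fin n, ∑ k : Fin n, f j i k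
      = ∑ i : Fin n, ∑ j : Fin n, ∑ k : Fin n, f i j k :=
  Finset.sum_comm

lemma sum3_swap23 {n : ℕ} (f : Fin n → Fin n → Fin n → ℂ) :
    ∑ i : Fin n, ∑ j : Fin n, ∑ k : Fin n, f i k j
      = ∑ i : Fin n, ∑ j : Fin n, ∑ k : Fin n, f i j k :=
  Finset.sum_congr rfl fun _ _ => Finset.sum_comm

lemma sum3_cyc1 {n : ℕ} (f : Fin n → Fin n → Fin n → ℂ) :
    ∑ i : Fin n, ∑ j : Fin n, ∑ k : Fin n, f j k i
      = ∑ i : Fin n, ∑ j : Fin n, ∑ k : Fin n, f i j k := by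
  have h1 : ∑ i : Fin n, ∑ j : Fin n, ∑ k : Fin n, f j k i
      = ∑ j : Fin n, ∑ i : Fin n, ∑ k : Fin n, f j k i := Finset.sum_comm
  rw [h1]
  exact Finset.sum_congr rfl fun _ _ => Finset.sum_comm

lemma sum3_cyc2 {n : ℕ} (f : Fin n → Fin n → Fin n → ℂ) :
    ∑ i : Fin n, ∑ j : Fin n, ∑ k : Fin n, f k i j
      = ∑ i : Fin n, ∑ j : Fin n, ∑ k : Fin n, f i j k := by
  have h1 : ∑ i : Fin n, ∑ j : Fin n, ∑ k : Fin n, f k i j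
      = ∑ i : Fin n, ∑ k : Fin n, ∑ j : Fin n, f k i j :=
    Finset.sum_congr rfl fun _ _ => Finset.sum_comm
  rw [h1]
  exact sum3_swap12 f

lemma sum3_swap13 {n : ℕ} (f : Fin n → Fin n → Fin n → ℂ) :
    ∑ i : Fin n, ∑ j : Fin n, ∑ k : Fin n, f k j i
      = ∑ i : Fin n, ∑ j : Fin n, ∑ k : Fin n, f i j k := by
  have h1 : ∑ i : Fin n, ∑ j : Fin n, ∑ k : Fin n, f k j i
      = ∑ i : Fin n, ∑ k : Fin n, ∑ j : Fin n, f k j i :=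
    Finset.sum_congr rfl fun _ _ => Finset.sum_comm
  rw [h1]
  exact sum3_cyc1 f

lemma six_mul_sum3 {n : ℕ} (f : Fin n → Fin n → Fin n → ℂ) :
    6 * (∑ i : Fin n, ∑ j : Fin n, ∑ k : Fin n, f i j k)
      = ∑ i : Fin n, ∑ j : Fin n, ∑ k : Fin n,
          (f i j k + f i k j + f j i k + f j k i + f k i j + f k j i) := by
  simp only [Finset.sum_add_distrib]
  rw [sum3_swap23 f, sum3_swap12 f, sum3_cyc1 f, sum3_cyc2 f, sum3_swap13 f]
  ring

lemma key {n : ℕ} (u : Fin n → Fin n → Fin n → ℂ)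
    (hsym : ∀ i j k, u i j k = u i k j) (i j k : Fin n) :
    f3 u i j k + f3 u i k j + f3 u j i k + f3 u j k i + f3 u k i j + f3 u k j i
      = g3 u i j k + g3 u i k j + g3 u j i k + g3 u j k i + g3 u k i j + g3 u k j i := by
  by_cases hij : i = j
  · subst hij
    by_cases hjk : i = k
    · subst hjk
      simp only [f3, g3, Complex.ofReal_add, Complex.ofReal_mul, Complex.ofReal_ofNat, c2,
        map_add]
      simp [lt_irrefl]
      ring
    · have h1 : ¬ (i < k ∧ k < i) := fun h => absurd h.2 h.1.asymm
      have h2 : ¬ (k < i ∧ i < k) := fun h => absurd h.2 h.1.asymm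
      simp only [f3, g3, hsym i k i, Complex.ofReal_add, Complex.ofReal_mul,
        Complex.ofReal_ofNat, c2, map_add]
      simp [hjk, Ne.symm hjk, lt_irrefl, h1, h2]
      ring
  · by_cases hjk : j = k
    · subst hjk
      have h1 : ¬ (i < j ∧ j < i) := fun h => absurd h.2 h.1.asymm
      have h2 : ¬ (j < i ∧ i < j) := fun h => absurd h.2 h.1.asymm
      simp only [f3, g3, hsym j j i, Complex.ofReal_add, Complex.ofReal_mul,
        Complex.ofReal_ofNat, c2, map_add]
      simp [hij, Ne.symm hij, lt_irrefl, h1, h2]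
      ring
    · by_cases hik : i = k
      · subst hik
        have h1 : ¬ (i < j ∧ j < i) := fun h => absurd h.2 h.1.asymm
        have h2 : ¬ (j < i ∧ i < j) := fun h => absurd h.2 h.1.asymm
        simp only [f3, g3, hsym i j i, Complex.ofReal_add, Complex.ofReal_mul,
          Complex.ofReal_ofNat, c2, map_add]
        simp [hij, Ne.symm hij, lt_irrefl, h1, h2]
        ring
      · simp only [f3, g3, hsym i k j, hsym j k i, hsym k j i, Complex.ofReal_add,
          Complex.ofReal_mul, Complex.ofReal_ofNat, c2, map_add]
        rcases lt_trichotomy i j with hij' | hij' | hij'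
        · rcases lt_trichotomy j k with hjk' | hjk' | hjk'
          · have h3 := hij'.trans hjk'
            simp [hij', hjk', h3, lt_asymm hij', lt_asymm hjk', lt_asymm h3,
              hij'.ne, hij'.ne', hjk'.ne, hjk'.ne', h3.ne, h3.ne']
            ring
          · exact absurd hjk' hjk
          · rcases lt_trichotomy i k with hik' | hik' | hik'
            · simp [hij', hjk', hik', lt_asymm hij', lt_asymm hjk', lt_asymm hik',
                hij'.ne, hij'.ne', hjk'.ne, hjk'.ne', hik'.ne, hik'.ne']
              ring
            · exact absurd hik' hik
            · have h3 := hik'.trans hij'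
              simp [hij', hik', h3, lt_asymm hij', lt_asymm hik', lt_asymm h3,
                hij'.ne, hij'.ne', hik'.ne, hik'.ne', h3.ne, h3.ne']
              ring
        · exact absurd hij' hij
        · rcases lt_trichotomy j k with hjk' | hjk' | hjk'
          · rcases lt_trichotomy i k with hik' | hik' | hik'
            · simp [hij', hjk', hik', lt_asymm hij', lt_asymm hjk', lt_asymm hik',
                hij'.ne, hij'.ne', hjk'.ne, hjk'.ne', hik'.ne, hik'.ne']
              ring
            · exact absurd hik' hik
            · simp [hij', hjk', hik', lt_asymm hij', lt_asymm hjk', lt_asymm hik',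
                hij'.ne, hij'.ne', hjk'.ne, hjk'.ne', hik'.ne, hik'.ne']
              ring
          · exact absurd hjk' hjk
          · have h3 := hjk'.trans hij'
            simp [hij', hjk', h3, lt_asymm hij', lt_asymm hjk', lt_asymm h3,
              hij'.ne, hij'.ne', hjk'.ne, hjk'.ne', h3.ne, h3.ne']
            ring

lemma rhs_eq {n : ℕ} (u : Fin n → Fin n → Fin n → ℂ) :
    ((((∑ i : Fin n, ∑ j : Fin n, ∑ k : Fin n,
          if i < j ∧ j < k then
            ‖u i j k + u j i k + u k i j‖ ^ 2 + ‖u i j k‖ ^ 2 +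
              ‖u j i k‖ ^ 2 + ‖u k i j‖ ^ 2
          else 0) +
        (∑ i : Fin n, ∑ j : Fin n,
          if i ≠ j then
            ‖u i j j + u j i j‖ ^ 2 + 2 * ‖u j i j‖ ^ 2
          else 0) +
        ∑ i : Fin n, 2 * ‖u i i i‖ ^ 2 : ℝ)) : ℂ) =
    ∑ i : Fin n, ∑ j : Fin n, ∑ k : Fin n, g3 u i j k := by
  simp only [g3, Finset.sum_add_distrib, Finset.sum_ite_eq, Finset.mem_univ, if_true,
    Complex.ofReal_add, Complex.ofReal_sum, apply_ite Complex.ofReal, Complex.ofReal_zero,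
    Complex.ofReal_mul, Complex.ofReal_ofNat, Complex.ofReal_pow]
  ring

end LagrangianCurvatureAux

open LagrangianCurvatureAux in
/-- Decomposition of the hermitian form `Θ(u) = Σ_{i,j,k} (u^i_{jk} conj(u^j_{ik}) + |u^j_{ik}|²)`
(the curvature `Θ_{Q_n(1)}` on the Lagrangian Grassmannian) into the blocks
`Θ_{ijk}` (for `i<j<k`), `Θ_{ij}` (for `i≠j`) and `Θ_i`, as in the proof of
Proposition 3.2 of the paper. -/
theorem lagrangian_curvature_decomposition (n : ℕ) (u : Fin n → Fin n → Fin n → ℂ)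
    (hsym : ∀ i j k, u i j k = u i k j) :
    (∑ i : Fin n, ∑ j : Fin n, ∑ k : Fin n,
        (u i j k * (starRingEnd ℂ) (u j i k) + ((‖u j i k‖ ^ 2 : ℝ) : ℂ))) =
    ((((∑ i : Fin n, ∑ j : Fin n, ∑ k : Fin n,
          if i < j ∧ j < k then
            ‖u i j k + u j i k + u k i j‖ ^ 2 + ‖u i j k‖ ^ 2 +
              ‖u j i k‖ ^ 2 + ‖u k i j‖ ^ 2
          else 0) +
        (∑ i : Fin n, ∑ j : Fin n,
          if i ≠ j then
            ‖u i j j + u j i j‖ ^ 2 + 2 * ‖u j i j‖ ^ 2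
          else 0) +
        ∑ i : Fin n, 2 * ‖u i i i‖ ^ 2 : ℝ)) : ℂ) := by
  rw [rhs_eq u]
  change ∑ i : Fin n, ∑ j : Fin n, ∑ k : Fin n, f3 u i j k
      = ∑ i : Fin n, ∑ j : Fin n, ∑ k : Fin n, g3 u i j k
  apply mul_left_cancel₀ (show (6 : ℂ) ≠ 0 by norm_num)
  rw [six_mul_sum3 (f3 u), six_mul_sum3 (g3 u)]
  exact Finset.sum_congr rfl fun i _ => Finset.sum_congr rfl fun j _ =>
    Finset.sum_congr rfl fun k _ => key u hsym i j k
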